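/- arXiv:2207.08252 — 2 statements merged into one kernel-verified Lean document; each statement's English description precedes it below -/
import Mathlib

section
/- Let m₀ be a 2π-periodic trigonometric polynomial with m₀(0) = 1 satisfying |m₀(ξ)|² + |m₀(ξ+π)|² ≤ 1 for all ξ. Define m₁(ξ) = e^{iξ} · conj(m₀(ξ+π)), m₂(ξ) = b(ξ)cos(ξ/2), m₃(ξ) = e^{iξ} · conj(m₂(ξ+π)), where b is a trigonometric polynomial satisfying |b(ξ)|² = 1 - |m₀(ξ)|² - |m₀(ξ+π)|². Then ∑_{r=0}^{3} |m_r(ξ)|² = 1 for all ξ. -/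
open Real Complex Finset

/-- A (complex) trigonometric polynomial: a finite linear combination of `e^{ikξ}`, `k ∈ ℤ`. -/
def IsTrigPoly (f : ℝ → ℂ) : Prop :=
  ∃ (n : ℕ) (c : ℤ → ℂ), ∀ ξ : ℝ,
    f ξ = ∑ k ∈ Finset.Icc (-(n : ℤ)) (n : ℤ), c k * Complex.exp (k * ξ * Complex.I)

theorem stmt1 (m₀ m₁ m₂ m₃ b : ℝ → ℂ)
    (hm₀poly : IsTrigPoly m₀)
    (hper : ∀ ξ : ℝ, m₀ (ξ + 2 * π) = m₀ ξ)
    (hm₀0 : m₀ 0 = 1)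
    (hineq : ∀ ξ : ℝ, ‖m₀ ξ‖ ^ 2 + ‖m₀ (ξ + π)‖ ^ 2 ≤ 1)
    (hbpoly : IsTrigPoly b)
    (hb : ∀ ξ : ℝ, ‖b ξ‖ ^ 2 = 1 - ‖m₀ ξ‖ ^ 2 - ‖m₀ (ξ + π)‖ ^ 2)
    (hm₁ : ∀ ξ : ℝ, m₁ ξ = Complex.exp (ξ * Complex.I) * starRingEnd ℂ (m₀ (ξ + π)))
    (hm₂ : ∀ ξ : ℝ, m₂ ξ = b ξ * Real.cos (ξ / 2))
    (hm₃ : ∀ ξ : ℝ, m₃ ξ = Complex.exp (ξ * Complex.I) * starRingEnd ℂ (m₂ (ξ + π))) :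
    ∀ ξ : ℝ, ‖m₀ ξ‖ ^ 2 + ‖m₁ ξ‖ ^ 2 + ‖m₂ ξ‖ ^ 2 + ‖m₃ ξ‖ ^ 2 = 1 := by
  intro ξ
  have hexp : ∀ x : ℝ, ‖Complex.exp (x * Complex.I)‖ = 1 := fun x => by
    simp [Complex.norm_exp_ofReal_mul_I x]
  have h1 : ‖m₁ ξ‖ = ‖m₀ (ξ + π)‖ := by
    rw [hm₁, norm_mul, hexp, one_mul, RCLike.norm_conj]
  have h2 : ∀ x : ℝ, ‖m₂ x‖ = ‖b x‖ * |Real.cos (x / 2)| := fun x => by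
    rw [hm₂, norm_mul, Complex.norm_real, Real.norm_eq_abs]
  have h3 : ‖m₃ ξ‖ = ‖m₂ (ξ + π)‖ := by
    rw [hm₃, norm_mul, hexp, one_mul, RCLike.norm_conj]
  have hbshift : ‖b (ξ + π)‖ ^ 2 = ‖b ξ‖ ^ 2 := by
    rw [hb, hb]
    have : ξ + π + π = ξ + 2 * π := by ring
    rw [this, hper]
    ring
  have hcos : Real.cos ((ξ + π) / 2) ^ 2 = Real.sin (ξ / 2) ^ 2 := by
    have : (ξ + π) / 2 = ξ / 2 + π / 2 := by ring
    rw [this, Real.cos_add_pi_div_two]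
    ring
  have hsc : Real.sin (ξ / 2) ^ 2 + Real.cos (ξ / 2) ^ 2 = 1 := Real.sin_sq_add_cos_sq _
  rw [h1, h3, h2 ξ, h2 (ξ + π), mul_pow, mul_pow, _root_.sq_abs, _root_.sq_abs, hcos, hbshift, hb ξ]
  nlinarith [hsc]
end

section
/- Let f₁ : ℝ → ℝ be continuous and 2π-periodic, J ∈ ℕ, and ε₁ > 0. If T₁ is a trigonometric polynomial with ‖f₁ - T₁‖_∞ < ε₁/2, then there exists a trigonometric polynomial T₂ of the form ∑_j α_j cos(N_j ξ) + ∑_j β_j sin(K_j ξ) with ‖T₂‖_∞ < ε₁/2 such that the derivatives satisfy (T₁+T₂)^{(j)}(0) = 0 for j = 1,…,J. -/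
open Real Finset Matrix

/-- A real trigonometric polynomial. -/
def IsRealTrigPoly (f : ℝ → ℝ) : Prop :=
  ∃ (n : ℕ) (a b : ℕ → ℝ), ∀ ξ : ℝ,
    f ξ = ∑ k ∈ Finset.range (n + 1), (a k * Real.cos (k * ξ) + b k * Real.sin (k * ξ))


lemma iterDeriv_trig (p q : ℕ) (α β : ℕ → ℝ) (N K : ℕ → ℝ) (n : ℕ) :
    iteratedDeriv n (fun ξ => (∑ i ∈ Finset.range p, α i * Real.cos (N i * ξ)) +
        ∑ i ∈ Finset.range q, β i * Real.sin (K i * ξ)) =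
      fun ξ => (∑ i ∈ Finset.range p, α i * N i ^ n * Real.cos (N i * ξ + n * (π / 2))) +
        ∑ i ∈ Finset.range q, β i * K i ^ n * Real.sin (K i * ξ + n * (π / 2)) := by
  induction n with
  | zero =>
    funext ξ
    simp
  | succ n ih =>
    rw [iteratedDeriv_succ, ih]
    funext ξ
    have hterm1 : ∀ i ∈ Finset.range p, HasDerivAt
        (fun ξ => α i * N i ^ n * Real.cos (N i * ξ + n * (π / 2)))
        (α i * N i ^ n * (-Real.sin (N i * ξ + n * (π / 2)) * N i)) ξ := by
      intro i _
      have h1 : HasDerivAt (fun ξ : ℝ => N i * ξ + n * (π / 2)) (N i) ξ := by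
        simpa using ((hasDerivAt_id ξ).const_mul (N i)).add_const ((n : ℝ) * (π / 2))
      exact ((Real.hasDerivAt_cos _).comp ξ h1).const_mul _
    have hterm2 : ∀ i ∈ Finset.range q, HasDerivAt
        (fun ξ => β i * K i ^ n * Real.sin (K i * ξ + n * (π / 2)))
        (β i * K i ^ n * (Real.cos (K i * ξ + n * (π / 2)) * K i)) ξ := by
      intro i _
      have h1 : HasDerivAt (fun ξ : ℝ => K i * ξ + n * (π / 2)) (K i) ξ := by
        simpa using ((hasDerivAt_id ξ).const_mul (K i)).add_const ((n : ℝ) * (π / 2))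
      exact ((Real.hasDerivAt_sin _).comp ξ h1).const_mul _
    have hD : HasDerivAt
        (fun ξ => (∑ i ∈ Finset.range p, α i * N i ^ n * Real.cos (N i * ξ + n * (π / 2))) +
          ∑ i ∈ Finset.range q, β i * K i ^ n * Real.sin (K i * ξ + n * (π / 2)))
        ((∑ i ∈ Finset.range p, α i * N i ^ n * (-Real.sin (N i * ξ + n * (π / 2)) * N i)) +
          ∑ i ∈ Finset.range q, β i * K i ^ n * (Real.cos (K i * ξ + n * (π / 2)) * K i)) ξ :=
      (HasDerivAt.fun_sum hterm1).add (HasDerivAt.fun_sum hterm2)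
    rw [hD.deriv]
    congr 1
    · refine Finset.sum_congr rfl fun i _ => ?_
      have harg : N i * ξ + (n + 1 : ℕ) * (π / 2) = (N i * ξ + n * (π / 2)) + π / 2 := by
        push_cast; ring
      rw [harg, Real.cos_add_pi_div_two, pow_succ]
      ring
    · refine Finset.sum_congr rfl fun i _ => ?_
      have harg : K i * ξ + (n + 1 : ℕ) * (π / 2) = (K i * ξ + n * (π / 2)) + π / 2 := by
        push_cast; ring
      rw [harg, Real.sin_add_pi_div_two, pow_succ]
      ring


lemma pad_sum_X {m p : ℕ} (h : m ≤ p) (f : Fin m → ℝ) :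
    ∑ i ∈ Finset.range p, (if hi : i < m then f ⟨i, hi⟩ else 0) = ∑ i, f i := by
  rw [← Finset.sum_subset (Finset.range_subset_range.mpr h)
      (fun i _ hi => dif_neg (by simpa using hi))]
  rw [← Fin.sum_univ_eq_sum_range]
  exact Finset.sum_congr rfl fun i _ => by simp [i.isLt]

lemma vsolve (m : ℕ) (s : ℕ) (hs : 1 ≤ s) (c : Fin m → ℝ) (δ : ℝ) (hδ : 0 < δ) :
    ∃ (γ : Fin m → ℝ) (K : Fin m → ℕ), (∑ i, |γ i| < δ) ∧
      ∀ r : Fin m, ∑ i, γ i * (K i : ℝ) ^ (2 * (r : ℕ) + s) = c r := by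
  classical
  set v : Fin m → ℝ := fun i => ((i : ℕ) + 1 : ℝ) ^ 2 with hv
  have hvinj : Function.Injective v := by
    intro i j hij
    have hij' : ((i : ℕ) + 1 : ℝ) ^ 2 = ((j : ℕ) + 1 : ℝ) ^ 2 := hij
    have : ((i : ℕ) + 1 : ℝ) = ((j : ℕ) + 1 : ℝ) := by
      have h1 : (0:ℝ) ≤ ((i : ℕ) : ℝ) := Nat.cast_nonneg _
      have h2 : (0:ℝ) ≤ ((j : ℕ) : ℝ) := Nat.cast_nonneg _
      nlinarith
    have : ((i : ℕ) : ℝ) = ((j : ℕ) : ℝ) := by linarith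
    exact Fin.ext (by exact_mod_cast this)
  set W : Matrix (Fin m) (Fin m) ℝ := (Matrix.vandermonde v)ᵀ with hW
  have hdet : IsUnit W.det := by
    rw [hW, Matrix.det_transpose]
    exact (Matrix.det_vandermonde_ne_zero_iff.mpr hvinj).isUnit
  set C : ℝ := ∑ i, ∑ r, |W⁻¹ i r| * |c r| with hC
  have hC0 : 0 ≤ C := Finset.sum_nonneg fun i _ => Finset.sum_nonneg fun r _ => by positivity
  obtain ⟨M₀, hM₀⟩ := exists_nat_gt (C / δ)
  set M : ℕ := M₀ + 1 with hM
  have hM1 : (1 : ℝ) ≤ (M : ℝ) := by exact_mod_cast Nat.one_le_iff_ne_zero.mpr (by omega)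
  have hMpos : (0 : ℝ) < (M : ℝ) := by linarith
  have hCM : C < δ * M := by
    have : C / δ < M := lt_of_le_of_lt (le_of_lt hM₀) (by exact_mod_cast Nat.lt_succ_self M₀)
    calc C = (C / δ) * δ := by field_simp
    _ < (M : ℝ) * δ := by apply mul_lt_mul_of_pos_right this hδ
    _ = δ * M := by ring
  set c' : Fin m → ℝ := fun r => c r / (M : ℝ) ^ (2 * (r : ℕ)) with hc'
  set u : Fin m → ℝ := W⁻¹ *ᵥ c' with hu
  have hWu : W *ᵥ u = c' := by
    rw [hu, Matrix.mulVec_mulVec, Matrix.mul_nonsing_inv _ hdet, Matrix.one_mulVec]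
  set K : Fin m → ℕ := fun i => M * ((i : ℕ) + 1) with hK
  have hKpos : ∀ i, (0 : ℝ) < (K i : ℝ) := by
    intro i
    have : 0 < K i := Nat.mul_pos (by omega) (Nat.succ_pos _)
    exact_mod_cast this
  refine ⟨fun i => u i / (K i : ℝ) ^ s, K, ?_, ?_⟩
  · -- smallness
    have hKM : ∀ i, (M : ℝ) ≤ (K i : ℝ) ^ s := by
      intro i
      have h1 : (M : ℝ) ≤ (K i : ℝ) := by
        have : M ≤ K i := Nat.le_mul_of_pos_right M (Nat.succ_pos _)
        exact_mod_cast this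
      calc (M : ℝ) ≤ (K i : ℝ) := h1
      _ = (K i : ℝ) ^ 1 := (pow_one _).symm
      _ ≤ (K i : ℝ) ^ s := pow_le_pow_right₀ (by linarith) hs
    have hub : ∀ i, |u i| ≤ ∑ r, |W⁻¹ i r| * |c r| := by
      intro i
      rw [hu]
      calc |(W⁻¹ *ᵥ c') i| = |∑ r, W⁻¹ i r * c' r| := by rw [Matrix.mulVec, dotProduct]
      _ ≤ ∑ r, |W⁻¹ i r * c' r| := Finset.abs_sum_le_sum_abs _ _
      _ ≤ ∑ r, |W⁻¹ i r| * |c r| := by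
          refine Finset.sum_le_sum fun r _ => ?_
          rw [abs_mul]
          refine mul_le_mul_of_nonneg_left ?_ (abs_nonneg _)
          rw [hc', abs_div]
          rw [abs_of_pos (by positivity : (0:ℝ) < (M:ℝ) ^ (2 * (r:ℕ)))]
          exact div_le_self (abs_nonneg _) (one_le_pow₀ hM1)
    calc ∑ i, |u i / (K i : ℝ) ^ s| ≤ ∑ i, (∑ r, |W⁻¹ i r| * |c r|) / M := by
          refine Finset.sum_le_sum fun i _ => ?_
          rw [abs_div, abs_of_pos (by positivity : (0:ℝ) < (K i:ℝ) ^ s)]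
          exact div_le_div₀ (Finset.sum_nonneg fun r _ => by positivity) (hub i) hMpos (hKM i)
    _ = C / M := by rw [hC, Finset.sum_div]
    _ < δ := by rw [div_lt_iff₀ hMpos]; linarith
  · -- the equations
    intro r
    have key : ∀ i, u i / (K i : ℝ) ^ s * (K i : ℝ) ^ (2 * (r : ℕ) + s)
        = (M : ℝ) ^ (2 * (r : ℕ)) * (v i ^ (r : ℕ) * u i) := by
      intro i
      have hKne : (K i : ℝ) ^ s ≠ 0 := by positivity
      have hsplit : (K i : ℝ) ^ (2 * (r : ℕ) + s) = (K i : ℝ) ^ (2 * (r : ℕ)) * (K i : ℝ) ^ s :=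
        pow_add _ _ _
      rw [hsplit]
      have hKv : (K i : ℝ) ^ (2 * (r : ℕ)) = (M : ℝ) ^ (2 * (r : ℕ)) * v i ^ (r : ℕ) := by
        have : (K i : ℝ) = (M : ℝ) * ((i : ℕ) + 1 : ℝ) := by rw [hK]; push_cast; ring
        rw [this, mul_pow, hv]
        rw [pow_mul ((i : ℕ) + 1 : ℝ) 2 (r : ℕ)]
      field_simp
      rw [hKv]; ring
    calc ∑ i, u i / (K i : ℝ) ^ s * (K i : ℝ) ^ (2 * (r : ℕ) + s)
        = ∑ i, (M : ℝ) ^ (2 * (r : ℕ)) * (v i ^ (r : ℕ) * u i) :=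
        Finset.sum_congr rfl fun i _ => key i
    _ = (M : ℝ) ^ (2 * (r : ℕ)) * ∑ i, v i ^ (r : ℕ) * u i := by rw [Finset.mul_sum]
    _ = (M : ℝ) ^ (2 * (r : ℕ)) * c' r := by
        have h2 : ∑ i, v i ^ (r : ℕ) * u i = (W *ᵥ u) r := by
          simp [Matrix.mulVec, dotProduct, hW, Matrix.vandermonde_apply]
        rw [h2, hWu]
    _ = c r := by
        have hMne : ((M : ℝ)) ^ (2 * (r : ℕ)) ≠ 0 := by positivity
        rw [hc']
        field_simp


lemma pad_sum {m p : ℕ} (h : m ≤ p) (f : Fin m → ℝ) :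
    ∑ i ∈ Finset.range p, (if hi : i < m then f ⟨i, hi⟩ else 0) = ∑ i, f i := by
  rw [← Finset.sum_subset (Finset.range_subset_range.mpr h)
      (fun i _ hi => dif_neg (by simpa using hi))]
  rw [← Fin.sum_univ_eq_sum_range]
  exact Finset.sum_congr rfl fun i _ => by simp [i.isLt]

lemma iteratedDeriv_add' (n : ℕ) {f g : ℝ → ℝ} (hf : ContDiff ℝ n f) (hg : ContDiff ℝ n g)
    (x : ℝ) :
    iteratedDeriv n (fun t => f t + g t) x = iteratedDeriv n f x + iteratedDeriv n g x := by
  have := iteratedDerivWithin_add (Set.mem_univ x) uniqueDiffOn_univ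
    hf.contDiffWithinAt hg.contDiffWithinAt
  simpa [iteratedDerivWithin_univ, Pi.add_def] using this

lemma contDiff_trig_sum (p : ℕ) (α : ℕ → ℝ) (N : ℕ → ℝ) :
    ContDiff ℝ ⊤ (fun ξ : ℝ => ∑ i ∈ Finset.range p, α i * Real.cos (N i * ξ)) :=
  ContDiff.sum fun i _ =>
    contDiff_const.mul (Real.contDiff_cos.comp (contDiff_const.mul contDiff_id))

lemma contDiff_trig_sum' (p : ℕ) (β : ℕ → ℝ) (K : ℕ → ℝ) :
    ContDiff ℝ ⊤ (fun ξ : ℝ => ∑ i ∈ Finset.range p, β i * Real.sin (K i * ξ)) :=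
  ContDiff.sum fun i _ =>
    contDiff_const.mul (Real.contDiff_sin.comp (contDiff_const.mul contDiff_id))

lemma cos_nat_mul_pi' (n : ℕ) : Real.cos ((n : ℝ) * π) = (-1) ^ n := by
  simpa using Real.cos_nat_mul_pi_sub 0 n


theorem stmt13 (f₁ : ℝ → ℝ) (hf₁ : Continuous f₁)
    (hper : ∀ ξ : ℝ, f₁ (ξ + 2 * π) = f₁ ξ)
    (J : ℕ) (ε₁ : ℝ) (hε₁ : 0 < ε₁)
    (T₁ : ℝ → ℝ) (hT₁ : IsRealTrigPoly T₁)
    (happrox : ∀ ξ : ℝ, |f₁ ξ - T₁ ξ| < ε₁ / 2) :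
    ∃ (p : ℕ) (α β : ℕ → ℝ) (N K : ℕ → ℕ),
      let T₂ : ℝ → ℝ := fun ξ =>
        (∑ j ∈ Finset.range p, α j * Real.cos ((N j : ℝ) * ξ)) +
        (∑ j ∈ Finset.range p, β j * Real.sin ((K j : ℝ) * ξ))
      (∀ ξ : ℝ, |T₂ ξ| < ε₁ / 2) ∧
      ∀ j : ℕ, 1 ≤ j → j ≤ J → iteratedDeriv j (fun ξ => T₁ ξ + T₂ ξ) 0 = 0 := by
  classical
  obtain ⟨n₀, a, b, hab⟩ := hT₁
  have hT1eq : T₁ = fun ξ => ∑ k ∈ Finset.range (n₀ + 1),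
      (a k * Real.cos (k * ξ) + b k * Real.sin (k * ξ)) := funext hab
  have hT1smooth : ContDiff ℝ ⊤ T₁ := by
    rw [hT1eq]
    exact ContDiff.sum fun k _ =>
      (contDiff_const.mul (Real.contDiff_cos.comp (contDiff_const.mul contDiff_id))).add
        (contDiff_const.mul (Real.contDiff_sin.comp (contDiff_const.mul contDiff_id)))
  set d : ℕ → ℝ := fun j => iteratedDeriv j T₁ 0 with hd
  set m₁ : ℕ := J / 2 with hm₁
  set m₂ : ℕ := (J + 1) / 2 with hm₂
  obtain ⟨γα, Nf, hγα, hEqα⟩ := vsolve m₁ 2 one_le_two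
    (fun r => (-1 : ℝ) ^ (r : ℕ) * d (2 * (r : ℕ) + 2)) (ε₁ / 4) (by linarith)
  obtain ⟨γβ, Kf, hγβ, hEqβ⟩ := vsolve m₂ 1 le_rfl
    (fun r => (-1 : ℝ) ^ ((r : ℕ) + 1) * d (2 * (r : ℕ) + 1)) (ε₁ / 4) (by linarith)
  set p : ℕ := max m₁ m₂ with hp
  set αv : ℕ → ℝ := fun i => if h : i < m₁ then γα ⟨i, h⟩ else 0 with hαv
  set Nv : ℕ → ℕ := fun i => if h : i < m₁ then Nf ⟨i, h⟩ else 0 with hNv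
  set βv : ℕ → ℝ := fun i => if h : i < m₂ then γβ ⟨i, h⟩ else 0 with hβv
  set Kv : ℕ → ℕ := fun i => if h : i < m₂ then Kf ⟨i, h⟩ else 0 with hKv
  have hT2smooth : ContDiff ℝ ⊤ (fun ξ : ℝ =>
      (∑ i ∈ Finset.range p, αv i * Real.cos ((Nv i : ℝ) * ξ)) +
        ∑ i ∈ Finset.range p, βv i * Real.sin ((Kv i : ℝ) * ξ)) :=
    (contDiff_trig_sum p αv _).add (contDiff_trig_sum' p βv _)
  -- the padded power sums
  have hSα : ∀ e : ℕ, ∑ i ∈ Finset.range p, αv i * ((Nv i : ℕ) : ℝ) ^ e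
      = ∑ i : Fin m₁, γα i * ((Nf i : ℕ) : ℝ) ^ e := by
    intro e
    rw [← pad_sum (le_max_left m₁ m₂) (fun i : Fin m₁ => γα i * ((Nf i : ℕ) : ℝ) ^ e)]
    exact Finset.sum_congr rfl fun i _ => by
      by_cases h : i < m₁ <;> simp [hαv, hNv, h]
  have hSβ : ∀ e : ℕ, ∑ i ∈ Finset.range p, βv i * ((Kv i : ℕ) : ℝ) ^ e
      = ∑ i : Fin m₂, γβ i * ((Kf i : ℕ) : ℝ) ^ e := by
    intro e
    rw [← pad_sum (le_max_right m₁ m₂) (fun i : Fin m₂ => γβ i * ((Kf i : ℕ) : ℝ) ^ e)]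
    exact Finset.sum_congr rfl fun i _ => by
      by_cases h : i < m₂ <;> simp [hβv, hKv, h]
  refine ⟨p, αv, βv, Nv, Kv, ?_, ?_⟩
  · -- sup bound
    intro ξ
    have h1 : |∑ i ∈ Finset.range p, αv i * Real.cos ((Nv i : ℝ) * ξ)|
        ≤ ∑ i ∈ Finset.range p, |αv i| :=
      (Finset.abs_sum_le_sum_abs _ _).trans (Finset.sum_le_sum fun i _ => by
        rw [abs_mul]
        exact mul_le_of_le_one_right (abs_nonneg _) (Real.abs_cos_le_one _))
    have h2 : |∑ i ∈ Finset.range p, βv i * Real.sin ((Kv i : ℝ) * ξ)|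
        ≤ ∑ i ∈ Finset.range p, |βv i| :=
      (Finset.abs_sum_le_sum_abs _ _).trans (Finset.sum_le_sum fun i _ => by
        rw [abs_mul]
        exact mul_le_of_le_one_right (abs_nonneg _) (Real.abs_sin_le_one _))
    have hα : ∑ i ∈ Finset.range p, |αv i| = ∑ i : Fin m₁, |γα i| := by
      rw [← pad_sum (le_max_left m₁ m₂) (fun i : Fin m₁ => |γα i|)]
      exact Finset.sum_congr rfl fun i _ => by by_cases h : i < m₁ <;> simp [hαv, h]
    have hβ : ∑ i ∈ Finset.range p, |βv i| = ∑ i : Fin m₂, |γβ i| := by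
      rw [← pad_sum (le_max_right m₁ m₂) (fun i : Fin m₂ => |γβ i|)]
      exact Finset.sum_congr rfl fun i _ => by by_cases h : i < m₂ <;> simp [hβv, h]
    calc |(∑ i ∈ Finset.range p, αv i * Real.cos ((Nv i : ℝ) * ξ)) +
          ∑ i ∈ Finset.range p, βv i * Real.sin ((Kv i : ℝ) * ξ)|
        ≤ |∑ i ∈ Finset.range p, αv i * Real.cos ((Nv i : ℝ) * ξ)| +
          |∑ i ∈ Finset.range p, βv i * Real.sin ((Kv i : ℝ) * ξ)| := abs_add_le _ _
      _ ≤ (∑ i ∈ Finset.range p, |αv i|) + ∑ i ∈ Finset.range p, |βv i| := add_le_add h1 h2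
      _ < ε₁ / 4 + ε₁ / 4 := by rw [hα, hβ]; exact add_lt_add hγα hγβ
      _ = ε₁ / 2 := by ring
  · -- derivatives vanish
    intro j hj1 hjJ
    rw [iteratedDeriv_add' j (hT1smooth.of_le le_top) (hT2smooth.of_le le_top)]
    have hval := congrFun (iterDeriv_trig p p αv βv
      (fun i => ((Nv i : ℕ) : ℝ)) (fun i => ((Kv i : ℕ) : ℝ)) j) 0
    simp only [mul_zero, zero_add] at hval
    rw [hval]
    rw [show (∑ i ∈ Finset.range p, αv i * ((Nv i : ℕ) : ℝ) ^ j *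
        Real.cos ((j : ℝ) * (π / 2)))
      = (∑ i ∈ Finset.range p, αv i * ((Nv i : ℕ) : ℝ) ^ j) * Real.cos ((j : ℝ) * (π / 2))
      from (Finset.sum_mul _ _ _).symm]
    rw [show (∑ i ∈ Finset.range p, βv i * ((Kv i : ℕ) : ℝ) ^ j *
        Real.sin ((j : ℝ) * (π / 2)))
      = (∑ i ∈ Finset.range p, βv i * ((Kv i : ℕ) : ℝ) ^ j) * Real.sin ((j : ℝ) * (π / 2))
      from (Finset.sum_mul _ _ _).symm]
    rcases Nat.even_or_odd j with ⟨t, ht⟩ | ⟨t, ht⟩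
    · -- j even, j = 2r+2
      obtain ⟨r, hr⟩ : ∃ r, j = 2 * r + 2 := ⟨t - 1, by omega⟩
      have hrm : r < m₁ := by omega
      have hcos : Real.cos ((j : ℝ) * (π / 2)) = (-1) ^ (r + 1) := by
        rw [show ((j : ℝ) * (π / 2)) = ((r + 1 : ℕ) : ℝ) * π by rw [hr]; push_cast; ring]
        exact cos_nat_mul_pi' (r + 1)
      have hsin : Real.sin ((j : ℝ) * (π / 2)) = 0 := by
        rw [show ((j : ℝ) * (π / 2)) = ((r + 1 : ℕ) : ℝ) * π by rw [hr]; push_cast; ring]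
        exact Real.sin_nat_mul_pi (r + 1)
      have hsum : ∑ i ∈ Finset.range p, αv i * ((Nv i : ℕ) : ℝ) ^ j
          = (-1 : ℝ) ^ r * d j := by
        rw [hSα j, hr]
        exact hEqα ⟨r, hrm⟩
      rw [hsum, hcos, hsin]
      have hpow : ((-1 : ℝ)) ^ r * ((-1 : ℝ)) ^ (r + 1) = -1 := by
        rw [← pow_add, show r + (r + 1) = 2 * r + 1 by ring, pow_succ, pow_mul]
        norm_num
      linear_combination d j * hpow
    · -- j odd, j = 2r+1
      obtain ⟨r, hr⟩ : ∃ r, j = 2 * r + 1 := ⟨t, by omega⟩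
      have hrm : r < m₂ := by omega
      have hcos : Real.cos ((j : ℝ) * (π / 2)) = 0 := by
        rw [show ((j : ℝ) * (π / 2)) = ((r : ℕ) : ℝ) * π + π / 2 by rw [hr]; push_cast; ring]
        rw [Real.cos_add_pi_div_two, Real.sin_nat_mul_pi]
        ring
      have hsin : Real.sin ((j : ℝ) * (π / 2)) = (-1) ^ r := by
        rw [show ((j : ℝ) * (π / 2)) = ((r : ℕ) : ℝ) * π + π / 2 by rw [hr]; push_cast; ring]
        rw [Real.sin_add_pi_div_two]
        exact cos_nat_mul_pi' r
      have hsum : ∑ i ∈ Finset.range p, βv i * ((Kv i : ℕ) : ℝ) ^ j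
          = (-1 : ℝ) ^ (r + 1) * d j := by
        rw [hSβ j, hr]
        exact hEqβ ⟨r, hrm⟩
      rw [hsum, hcos, hsin]
      have hpow : ((-1 : ℝ)) ^ (r + 1) * ((-1 : ℝ)) ^ r = -1 := by
        rw [← pow_add, show r + 1 + r = 2 * r + 1 by ring, pow_succ, pow_mul]
        norm_num
      linear_combination d j * hpow
end
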